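/- Let N ≥ 1 and let x_j = cos(jπ/N) for j = 0, …, N be the Chebyshev–Gauss–Lobatto points. Define c̄₀ = c̄_N = 2 and c̄_j = 1 for 0 < j < N, and define the (N+1) × (N+1) real matrix D by D_{lm} = (c̄_l (−1)^{l+m}) / (c̄_m (x_l − x_m)) for l ≠ m, and D_{ll} = −Σ_{m ≠ l} D_{lm}. Then for every polynomial p ∈ ℝ[X] (or ℂ[X]) with deg p ≤ N and every l ∈ {0, …, N}, p′(x_l) = Σ_{m=0}^{N} D_{lm} p(x_m). -/

import Mathlib

open Finset

noncomputable section

open Polynomial Polynomial.Chebyshev in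
lemma chebU_eval_one' : ∀ k : ℕ, (U ℝ (k:ℤ)).eval 1 = (k:ℝ) + 1 := by
  intro k
  induction k using Nat.strong_induction_on with
  | _ k ih =>
    match k with
    | 0 => simp [U_zero]
    | 1 => norm_num [U_one]
    | (m+2) =>
      have h1 := ih (m+1) (by omega)
      have h0 := ih m (by omega)
      rw [show ((m+2 : ℕ) : ℤ) = (m : ℤ) + 2 by push_cast; ring, U_add_two]
      rw [show ((m+1 : ℕ) : ℤ) = (m : ℤ) + 1 by push_cast; ring] at h1
      simp only [eval_sub, eval_mul, eval_ofNat, eval_X, h1, h0]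
      push_cast; ring

open Polynomial Polynomial.Chebyshev in
lemma chebU_eval_neg_one' : ∀ k : ℕ, (U ℝ (k:ℤ)).eval (-1) = (-1:ℝ)^k * ((k:ℝ) + 1) := by
  intro k
  induction k using Nat.strong_induction_on with
  | _ k ih =>
    match k with
    | 0 => simp [U_zero]
    | 1 => norm_num [U_one]
    | (m+2) =>
      have h1 := ih (m+1) (by omega)
      have h0 := ih m (by omega)
      rw [show ((m+2 : ℕ) : ℤ) = (m : ℤ) + 2 by push_cast; ring, U_add_two]
      rw [show ((m+1 : ℕ) : ℤ) = (m : ℤ) + 1 by push_cast; ring] at h1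
      simp only [eval_sub, eval_mul, eval_ofNat, eval_X, eval_neg, eval_one, h1, h0]
      push_cast; ring

open Polynomial Polynomial.Chebyshev in
lemma chebT_natDegree_le' : ∀ k : ℕ, (T ℝ (k:ℤ)).natDegree ≤ k := by
  intro k
  induction k using Nat.strong_induction_on with
  | _ k ih =>
    match k with
    | 0 => simp [T_zero]
    | 1 => simp [T_one]
    | (m+2) =>
      have h1 := ih (m+1) (by omega)
      have h0 := ih m (by omega)
      rw [show ((m+2 : ℕ) : ℤ) = (m : ℤ) + 2 by push_cast; ring, T_add_two]
      rw [show ((m+1 : ℕ) : ℤ) = (m : ℤ) + 1 by push_cast; ring] at h1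
      refine le_trans (natDegree_sub_le _ _) ?_
      simp only [max_le_iff]
      refine ⟨le_trans natDegree_mul_le (le_trans (add_le_add natDegree_mul_le h1) ?_), by omega⟩
      simp only [natDegree_X]
      have : (2 : ℝ[X]).natDegree = 0 := natDegree_ofNat 2
      omega

open Polynomial Polynomial.Chebyshev Lagrange in
/-- the Chebyshev spectral collocation differentiation matrix on the
Gauss–Lobatto grid `x_j = cos(jπ/N)` is exact on polynomials of degree at most `N`:
applied to the nodal values of `p`, it returns the nodal values of `p′`. -/
theorem stmt13 (N : ℕ) (hN : 1 ≤ N)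
    (x : Fin (N + 1) → ℝ) (hx : ∀ j : Fin (N + 1), x j = Real.cos (j * Real.pi / N))
    (c : Fin (N + 1) → ℝ)
    (hc : ∀ j : Fin (N + 1), c j = if (j : ℕ) = 0 ∨ (j : ℕ) = N then 2 else 1)
    (D : Matrix (Fin (N + 1)) (Fin (N + 1)) ℝ)
    (hDoff : ∀ l m : Fin (N + 1), l ≠ m →
      D l m = c l * (-1 : ℝ) ^ ((l : ℕ) + (m : ℕ)) / (c m * (x l - x m)))
    (hDdiag : ∀ l : Fin (N + 1), D l l = -∑ m ∈ Finset.univ.erase l, D l m)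
    (p : Polynomial ℝ) (hp : p.natDegree ≤ N) :
    ∀ l : Fin (N + 1),
      (Polynomial.derivative p).eval (x l) = ∑ m : Fin (N + 1), D l m * p.eval (x m) := by
  have hNR : (N:ℝ) ≠ 0 := Nat.cast_ne_zero.mpr (by omega)
  have hNR' : (0:ℝ) < N := by positivity
  set θ : Fin (N+1) → ℝ := fun j => j * Real.pi / N with hθdef
  have hxθ : ∀ j, x j = Real.cos (θ j) := hx
  have hNθ : ∀ j, (N:ℝ) * θ j = (j:ℕ) * Real.pi := by
    intro j; rw [hθdef]; field_simp
  have hθmem : ∀ j, θ j ∈ Set.Icc 0 Real.pi := by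
    intro j
    constructor
    · exact div_nonneg (mul_nonneg (Nat.cast_nonneg _) Real.pi_pos.le) (Nat.cast_nonneg _)
    · rw [div_le_iff₀ hNR']
      have : ((j:ℕ):ℝ) ≤ (N:ℝ) := Nat.cast_le.mpr (by omega)
      nlinarith [Real.pi_pos]
  have hxinj : Function.Injective x := by
    intro i j h
    rw [hxθ, hxθ] at h
    have hθij := Real.injOn_cos (hθmem i) (hθmem j) h
    have h2 : ((i:ℕ):ℝ) * Real.pi = ((j:ℕ):ℝ) * Real.pi := by
      rw [← hNθ i, ← hNθ j, hθij]
    have h3 : ((i:ℕ):ℝ) = ((j:ℕ):ℝ) := mul_right_cancel₀ Real.pi_ne_zero h2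
    exact Fin.ext (Nat.cast_injective h3)
  have hvs : Set.InjOn x ↑(Finset.univ : Finset (Fin (N+1))) := hxinj.injOn
  have hcard : #(Finset.univ : Finset (Fin (N+1))) = N + 1 := by simp
  -- trig values at nodes
  have hcosnat : ∀ n : ℕ, Real.cos (n * Real.pi) = (-1:ℝ)^n := by
    intro n; simpa using Real.cos_add_nat_mul_pi 0 n
  -- Chebyshev evaluations
  have hTevalN : ∀ j, (T ℝ (N:ℤ)).eval (x j) = (-1:ℝ)^(j:ℕ) := by
    intro j
    rw [hxθ, T_real_cos]
    rw [show ((N:ℤ):ℝ) = (N:ℝ) by push_cast; ring, hNθ, hcosnat]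
  have hTevalN1 : ∀ j, (T ℝ ((N:ℤ)-1)).eval (x j) = (-1:ℝ)^(j:ℕ) * Real.cos (θ j) := by
    intro j
    rw [hxθ, T_real_cos]
    rw [show (((N:ℤ)-1:ℤ):ℝ) * θ j = (j:ℕ) * Real.pi - θ j by push_cast; rw [← hNθ]; ring]
    rw [Real.cos_sub, Real.sin_nat_mul_pi, hcosnat]
    ring
  set g : ℝ[X] := ((N:ℤ) : ℝ[X]) * (T ℝ ((N:ℤ)-1) - X * T ℝ (N:ℤ)) with hgdef
  have hgT : (1 - X^2) * Polynomial.derivative (T ℝ (N:ℤ)) = g := by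
    have h := one_sub_X_sq_mul_derivative_T_eq_poly_in_T (R := ℝ) ((N:ℤ)-1)
    rw [sub_add_cancel] at h
    rw [hgdef, h]
    push_cast
    ring
  have hg_root : ∀ j, g.eval (x j) = 0 := by
    intro j
    rw [hgdef]
    simp only [eval_mul, eval_sub, eval_X, eval_intCast, hTevalN, hTevalN1]
    rw [hxθ]; ring
  -- U evaluations at nodes
  have hUm1 : ∀ j, (U ℝ ((N:ℤ)-1)).eval (x j) * Real.sin (θ j) = 0 := by
    intro j
    rw [hxθ, U_real_cos]
    rw [show ((((N:ℤ)-1:ℤ):ℝ) + 1) * θ j = (j:ℕ) * Real.pi by push_cast; rw [← hNθ]; ring]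
    exact Real.sin_nat_mul_pi _
  have hUm2 : ∀ j, (U ℝ ((N:ℤ)-2)).eval (x j) * Real.sin (θ j)
      = -((-1:ℝ)^(j:ℕ) * Real.sin (θ j)) := by
    intro j
    rw [hxθ, U_real_cos]
    rw [show ((((N:ℤ)-2:ℤ):ℝ) + 1) * θ j = (j:ℕ) * Real.pi - θ j by push_cast; rw [← hNθ]; ring]
    exact Real.sin_nat_mul_pi_sub _ _
  -- derivative of g evaluated at a point
  have hdg : Polynomial.derivative g
      = ((N:ℤ):ℝ[X]) * ((((N:ℤ)-1 : ℤ):ℝ[X]) * U ℝ ((N:ℤ)-1-1)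
        - (T ℝ (N:ℤ) + X * (((N:ℤ):ℝ[X]) * U ℝ ((N:ℤ)-1)))) := by
    rw [hgdef, derivative_mul, derivative_intCast, zero_mul, zero_add, derivative_sub,
      derivative_mul, derivative_X, one_mul, T_derivative_eq_U, T_derivative_eq_U]
  have hdgeval : ∀ j, (Polynomial.derivative g).eval (x j)
      = (N:ℝ) * (((N:ℝ)-1) * (U ℝ ((N:ℤ)-2)).eval (x j)
        - ((-1:ℝ)^(j:ℕ) + x j * ((N:ℝ) * (U ℝ ((N:ℤ)-1)).eval (x j)))) := by
    intro j
    rw [hdg]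
    simp only [eval_mul, eval_sub, eval_add, eval_X, eval_intCast, hTevalN]
    norm_num
    rw [show (N:ℤ)-1-1 = (N:ℤ)-2 by ring]
    tauto
  -- the key computation
  have hkey : ∀ j, (Polynomial.derivative g).eval (x j)
      = -(N:ℝ)^2 * c j * (-1:ℝ)^(j:ℕ) := by
    intro j
    rcases eq_or_ne (j:ℕ) 0 with hj0 | hj0
    · -- j = 0 : x j = 1
      have hθ0 : θ j = 0 := by simp only [hθdef]; rw [hj0]; simp
      have hxj : x j = 1 := by rw [hxθ, hθ0, Real.cos_zero]
      have hU1 : (U ℝ ((N:ℤ)-1)).eval (x j) = (N:ℝ) := by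
        rw [hxj, show (N:ℤ)-1 = ((N-1 : ℕ):ℤ) by omega, chebU_eval_one']
        rw [Nat.cast_sub hN]; ring
      have hU2 : ((N:ℝ)-1) * (U ℝ ((N:ℤ)-2)).eval (x j) = ((N:ℝ)-1)^2 := by
        rcases eq_or_lt_of_le hN with h1 | h2
        · rw [← h1]; norm_num
        · rw [hxj, show (N:ℤ)-2 = ((N-2 : ℕ):ℤ) by omega, chebU_eval_one']
          rw [Nat.cast_sub (by omega)]
          push_cast; ring
      rw [hdgeval, hU1, mul_comm (((N:ℝ)-1)) _, ← mul_comm (((N:ℝ)-1)) _, hU2, hxj, hj0,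
        hc, if_pos (Or.inl hj0)]
      ring
    · rcases eq_or_ne (j:ℕ) N with hjN | hjN
      · -- j = N : x j = -1
        have hθN : θ j = Real.pi := by simp only [hθdef]; rw [hjN]; field_simp
        have hxj : x j = -1 := by rw [hxθ, hθN, Real.cos_pi]
        have hU1 : (U ℝ ((N:ℤ)-1)).eval (x j) = (-1:ℝ)^(N-1) * (N:ℝ) := by
          rw [hxj, show (N:ℤ)-1 = ((N-1 : ℕ):ℤ) by omega, chebU_eval_neg_one']
          rw [Nat.cast_sub hN]; ring
        have hU2 : ((N:ℝ)-1) * (U ℝ ((N:ℤ)-2)).eval (x j) = (-1:ℝ)^N * ((N:ℝ)-1)^2 := by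
          rcases eq_or_lt_of_le hN with h1 | h2
          · rw [← h1]; norm_num
          · rw [hxj, show (N:ℤ)-2 = ((N-2 : ℕ):ℤ) by omega, chebU_eval_neg_one']
            rw [Nat.cast_sub (by omega), show (-1:ℝ)^(N-2) = (-1:ℝ)^N by
              rw [show N = N - 2 + 2 by omega]; rw [pow_add]; norm_num]
            push_cast; ring
        have hpow : (-1:ℝ)^(N-1) = -(-1:ℝ)^N := by
          conv_rhs => rw [show N = (N-1) + 1 by omega]
          rw [pow_succ]; ring
        rw [hdgeval, hU1, mul_comm (((N:ℝ)-1)) _, ← mul_comm (((N:ℝ)-1)) _, hU2, hxj, hjN,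
          hc, if_pos (Or.inr hjN), hpow]
        ring
      · -- interior
        have hsθ : Real.sin (θ j) ≠ 0 := by
          have h1 : 0 < θ j := by
            rw [hθdef]
            have : (0:ℝ) < (j:ℕ) := by
              have : 0 < (j:ℕ) := Nat.pos_of_ne_zero hj0
              exact_mod_cast this
            positivity
          have h2 : θ j < Real.pi := by
            rw [hθdef, div_lt_iff₀ hNR']
            have : ((j:ℕ):ℝ) < (N:ℝ) := by
              have : (j:ℕ) < N := lt_of_le_of_ne (by omega) hjN
              exact_mod_cast this
            nlinarith [Real.pi_pos]
          exact ne_of_gt (Real.sin_pos_of_pos_of_lt_pi h1 h2)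
        have hU1 : (U ℝ ((N:ℤ)-1)).eval (x j) = 0 :=
          by have := hUm1 j; exact (mul_eq_zero.mp this).resolve_right hsθ
        have hU2 : (U ℝ ((N:ℤ)-2)).eval (x j) = -(-1:ℝ)^(j:ℕ) := by
          have := hUm2 j
          field_simp at this
          exact mul_right_cancel₀ hsθ (by rw [this])
        rw [hdgeval, hU1, hU2, hc, if_neg (by push_neg; exact ⟨hj0, hjN⟩)]
        ring
  -- nodal polynomial machinery
  set w : ℝ[X] := nodal Finset.univ x with hwdef
  set E : Fin (N+1) → ℝ := fun j => (Polynomial.derivative w).eval (x j) with hEdef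
  have hEerase : ∀ j, E j = (nodal ((Finset.univ).erase j) x).eval (x j) :=
    fun j => eval_nodal_derivative_eval_node_eq (mem_univ j)
  have hEne : ∀ j, E j ≠ 0 := by
    intro j
    rw [hEerase j]
    apply eval_nodal_not_at_node
    intro i hi
    exact fun h => (mem_erase.mp hi).1 (hxinj h).symm
  have hmonic : w.Monic := nodal_monic
  have hwne : w ≠ 0 := nodal_ne_zero
  have hmod : g %ₘ w = 0 := by
    apply Polynomial.eq_zero_of_degree_lt_of_eval_index_eq_zero Finset.univ hvs
    · refine lt_of_lt_of_le (degree_modByMonic_lt g hmonic) ?_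
      rw [hwdef, degree_nodal]
    · intro i _
      rw [modByMonic_eq_sub_mul_div g w]
      simp only [eval_sub, eval_mul, hg_root]
      rw [hwdef, eval_nodal_at_node (mem_univ i)]
      ring
  have hfac : g = w * (g /ₘ w) := by
    conv_lhs => rw [← modByMonic_add_div g w]
    rw [hmod, zero_add]
  have hgne : g ≠ 0 := by
    intro h
    have h0 := hkey 0
    rw [h, derivative_zero, eval_zero] at h0
    have hc0 : c 0 = 2 := by rw [hc]; simp
    rw [hc0] at h0
    simp at h0
    omega
  have hqne : g /ₘ w ≠ 0 := by
    intro h; exact hgne (by rw [hfac, h, mul_zero])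
  have hgdeg : g.natDegree ≤ N + 1 := by
    rw [← hgT]
    refine le_trans natDegree_mul_le ?_
    have h1 : (1 - X^2 : ℝ[X]).natDegree ≤ 2 := by
      refine le_trans (natDegree_sub_le _ _) ?_
      simp [natDegree_one, natDegree_X_pow]
    have h2 : (Polynomial.derivative (T ℝ (N:ℤ))).natDegree ≤ N - 1 := by
      refine le_trans (natDegree_derivative_le _) ?_
      exact Nat.sub_le_sub_right (chebT_natDegree_le' N) 1
    omega
  have hqdeg : (g /ₘ w).natDegree = 0 := by
    have h := congrArg Polynomial.natDegree hfac
    rw [natDegree_mul hwne hqne] at h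
    have hwnat : w.natDegree = N + 1 := by rw [hwdef, natDegree_nodal, hcard]
    rw [hwnat] at h
    omega
  obtain ⟨α, hqα⟩ : ∃ α : ℝ, g /ₘ w = C α := ⟨_, eq_C_of_natDegree_eq_zero hqdeg⟩
  have hα0 : α ≠ 0 := by
    intro h; exact hqne (by rw [hqα, h, map_zero])
  have hαE : ∀ j, α * E j = -(N:ℝ)^2 * c j * (-1:ℝ)^(j:ℕ) := by
    intro j
    rw [← hkey j]
    conv_rhs => rw [hfac, hqα]
    rw [derivative_mul, derivative_C, mul_zero, add_zero]
    simp only [eval_mul, eval_C, hEdef]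
    ring
  -- the Lagrange basis and its derivatives
  set B : Fin (N+1) → ℝ[X] := fun m => Lagrange.basis Finset.univ x m with hBdef
  have hBfac : ∀ m, B m = C (E m)⁻¹ * nodal ((Finset.univ).erase m) x := by
    intro m
    have hEm : (Polynomial.derivative (nodal Finset.univ x)).eval (x m) = E m := rfl
    show Lagrange.basis Finset.univ x m = C (E m)⁻¹ * nodal ((Finset.univ).erase m) x
    rw [basis_eq_prod_sub_inv_mul_nodal_div (mem_univ m),
      ← nodal_erase_eq_nodal_div (mem_univ m),
      nodalWeight_eq_eval_derivative_nodal (mem_univ m), hEm]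
  have hBder : ∀ l m, l ≠ m → (Polynomial.derivative (B m)).eval (x l)
      = E l / ((x l - x m) * E m) := by
    intro l m hlm
    have hxlm : x l - x m ≠ 0 := sub_ne_zero.2 (fun h => hlm (hxinj h))
    have hsplit : w = (X - C (x m)) * nodal ((Finset.univ).erase m) x :=
      nodal_eq_mul_nodal_erase (mem_univ m)
    have hder : (Polynomial.derivative (nodal ((Finset.univ).erase m) x)).eval (x l)
        = E l / (x l - x m) := by
      rw [eq_div_iff hxlm]
      have h := congrArg (fun q => (Polynomial.derivative q).eval (x l)) hsplit
      simp only [derivative_mul, derivative_sub, derivative_X, derivative_C, sub_zero,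
        one_mul, eval_add, eval_mul, eval_sub, eval_X, eval_C] at h
      rw [eval_nodal_at_node (mem_erase.mpr ⟨hlm, mem_univ l⟩)] at h
      have hEl : E l = (Polynomial.derivative w).eval (x l) := rfl
      rw [hEl, h]; ring
    rw [hBfac m, derivative_mul, derivative_C, zero_mul, zero_add]
    simp only [eval_mul, eval_C, hder]
    field_simp
  have hDoffB : ∀ l m, l ≠ m → (Polynomial.derivative (B m)).eval (x l) = D l m := by
    intro l m hlm
    have hxlm : x l - x m ≠ 0 := sub_ne_zero.2 (fun h => hlm (hxinj h))
    have hcl : c m ≠ 0 := by rw [hc]; split <;> norm_num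
    have hEl := hαE l
    have hEm := hαE m
    have hb : (-1:ℝ)^(m:ℕ) * (-1:ℝ)^(m:ℕ) = 1 := by
      rw [← pow_add]; exact Even.neg_one_pow ⟨(m:ℕ), by ring⟩
    rw [hBder l m hlm, hDoff l m hlm, pow_add]
    have hElv : E l = (-(N:ℝ)^2 * c l * (-1:ℝ)^(l:ℕ)) / α := by
      rw [eq_div_iff hα0]; rw [← hEl]; ring
    have hEmv : E m = (-(N:ℝ)^2 * c m * (-1:ℝ)^(m:ℕ)) / α := by
      rw [eq_div_iff hα0]; rw [← hEm]; ring
    rw [hElv, hEmv]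
    have hN2 : -(N:ℝ)^2 ≠ 0 := neg_ne_zero.mpr (by positivity)
    have hm2 : (-1:ℝ)^((m:ℕ)*2) = 1 := by rw [mul_comm, pow_mul]; norm_num
    field_simp
    ring_nf
    rw [hm2]
    ring
  -- diagonal entries
  have hDB : ∀ l m, (Polynomial.derivative (B m)).eval (x l) = D l m := by
    intro l m
    rcases eq_or_ne l m with rfl | hlm
    · have hsum : ∑ m, B m = 1 := sum_basis hvs univ_nonempty
      have hsum0 : ∑ m, (Polynomial.derivative (B m)).eval (x l) = 0 := by
        have h := congrArg (fun q => (Polynomial.derivative q).eval (x l)) hsum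
        simp only [derivative_one, eval_zero] at h
        rw [← h, derivative_sum, eval_finset_sum]
      rw [← Finset.add_sum_erase _ _ (mem_univ l)] at hsum0
      have hll : (Polynomial.derivative (B l)).eval (x l)
          = -∑ m ∈ (Finset.univ).erase l, (Polynomial.derivative (B m)).eval (x l) := by
        linarith
      rw [hll, hDdiag]
      congr 1
      exact Finset.sum_congr rfl fun m hm => hDoffB l m (mem_erase.mp hm).1.symm
    · exact hDoffB l m hlm
  -- interpolation
  intro l
  have hpdeg : p.degree < #(Finset.univ : Finset (Fin (N+1))) := by
    rw [hcard]
    refine lt_of_le_of_lt degree_le_natDegree ?_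
    exact_mod_cast Nat.lt_succ_of_le hp
  have hinterp : p = ∑ m, C (p.eval (x m)) * B m := by
    conv_lhs => rw [eq_interpolate hvs hpdeg]
    rw [interpolate_apply]
  calc (Polynomial.derivative p).eval (x l)
      = ∑ m, p.eval (x m) * (Polynomial.derivative (B m)).eval (x l) := by
        conv_lhs => rw [hinterp]
        rw [derivative_sum, eval_finset_sum]
        refine Finset.sum_congr rfl fun m _ => ?_
        rw [derivative_mul, derivative_C, zero_mul, zero_add, eval_mul, eval_C]
    _ = ∑ m : Fin (N+1), D l m * p.eval (x m) := by
        refine Finset.sum_congr rfl fun m _ => ?_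
        rw [hDB l m, mul_comm]
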